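/- Combining the previous facts: for each π ∈ [0,1)^M, each row-stochastic M×M matrix P (M ≥ 2) and each nonnegative μ ∈ ℝ^M, there exist a row-stochastic matrix P̂ and a nonnegative vector μ̂ ∈ ℝ^M such that P̂_{k,k} = π_k for every k, P̂_{k,i}·μ̂_k = P_{k,i}·μ_k for all i ≠ k, and (P̂_{k,k} - 1)·μ̂_k = (P_{k,k} - 1)·μ_k for every k. -/

import Mathlib

open Finset

/-- Theorem 1 of the paper: non-identifiability of self-loops. -/
theorem stmt_4 (M : ℕ) (hM : 2 ≤ M)
    (P : Fin M → Fin M → ℝ)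
    (hPnn : ∀ k i, 0 ≤ P k i) (hProw : ∀ k, ∑ i, P k i = 1)
    (μ : Fin M → ℝ) (hμ : ∀ k, 0 ≤ μ k)
    (π : Fin M → ℝ) (hπ : ∀ k, 0 ≤ π k ∧ π k < 1) :
    ∃ (Phat : Fin M → Fin M → ℝ) (μhat : Fin M → ℝ),
      (∀ k i, 0 ≤ Phat k i) ∧ (∀ k, ∑ i, Phat k i = 1) ∧
      (∀ k, 0 ≤ μhat k) ∧
      (∀ k, Phat k k = π k) ∧
      (∀ k i, i ≠ k → Phat k i * μhat k = P k i * μ k) ∧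
      (∀ k, (Phat k k - 1) * μhat k = (P k k - 1) * μ k) := by
  classical
  have hM1 : 1 < M := hM
  -- an index different from k
  set other : Fin M → Fin M := fun k =>
    if k = ⟨0, by omega⟩ then ⟨1, by omega⟩ else ⟨0, by omega⟩ with hother
  have hother_ne : ∀ k, other k ≠ k := by
    intro k
    simp only [hother]
    split
    · subst ‹_›; intro h; exact absurd (Fin.val_eq_val _ _ |>.mpr h) (by simp)
    · intro h; exact ‹k ≠ _› h.symm
  have hπ1 : ∀ k, (1 : ℝ) - π k > 0 := fun k => by linarith [(hπ k).2]
  have hπ1' : ∀ k, (1 : ℝ) - π k ≠ 0 := fun k => ne_of_gt (hπ1 k)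
  have hPle : ∀ k, P k k ≤ 1 := by
    intro k
    calc P k k ≤ ∑ i, P k i := Finset.single_le_sum (fun i _ => hPnn k i) (mem_univ k)
    _ = 1 := hProw k
  have hPoff : ∀ k, ∑ i ∈ univ.erase k, P k i = 1 - P k k := by
    intro k
    have := hProw k
    rw [← Finset.add_sum_erase _ _ (mem_univ k)] at this
    linarith
  refine ⟨fun k i =>
      if i = k then π k
      else if μ k * (1 - P k k) = 0 then (if i = other k then 1 - π k else 0)
      else P k i * (1 - π k) / (1 - P k k),
    fun k => μ k * (1 - P k k) / (1 - π k), ?_, ?_, ?_, ?_, ?_, ?_⟩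
  · intro k i
    dsimp only
    split
    · exact (hπ k).1
    split
    · split
      · linarith [hπ1 k]
      · exact le_rfl
    · have h1 : 1 - P k k ≠ 0 := by
        rename_i h; intro h0; exact h (by rw [h0, mul_zero])
      have h2 : 0 < 1 - P k k := lt_of_le_of_ne (by linarith [hPle k]) (Ne.symm h1)
      exact div_nonneg (mul_nonneg (hPnn k i) (le_of_lt (hπ1 k))) (le_of_lt h2)
  · intro k
    rw [← Finset.add_sum_erase _ _ (mem_univ k)]
    beta_reduce
    rw [if_pos rfl]
    by_cases h : μ k * (1 - P k k) = 0
    · have : ∑ i ∈ univ.erase k, (if i = k then π k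
          else if μ k * (1 - P k k) = 0 then (if i = other k then 1 - π k else 0)
          else P k i * (1 - π k) / (1 - P k k))
          = ∑ i ∈ univ.erase k, (if i = other k then 1 - π k else 0) := by
        apply Finset.sum_congr rfl
        intro i hi
        rw [if_neg (Finset.mem_erase.mp hi).1, if_pos h]
      rw [this, Finset.sum_ite_eq' _ (other k),
        if_pos (Finset.mem_erase.mpr ⟨hother_ne k, mem_univ _⟩)]
      ring
    · have h1 : 1 - P k k ≠ 0 := fun h0 => h (by rw [h0, mul_zero])
      have : ∑ i ∈ univ.erase k, (if i = k then π k
          else if μ k * (1 - P k k) = 0 then (if i = other k then 1 - π k else 0)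
          else P k i * (1 - π k) / (1 - P k k))
          = ∑ i ∈ univ.erase k, P k i * (1 - π k) / (1 - P k k) := by
        apply Finset.sum_congr rfl
        intro i hi
        rw [if_neg (Finset.mem_erase.mp hi).1, if_neg h]
      rw [this, ← Finset.sum_div, ← Finset.sum_mul, hPoff k]
      field_simp
      ring
  · intro k
    have h2 : 0 ≤ 1 - P k k := by linarith [hPle k]
    exact div_nonneg (mul_nonneg (hμ k) h2) (le_of_lt (hπ1 k))
  · intro k; simp
  · intro k i hik
    dsimp only
    rw [if_neg hik]
    by_cases h : μ k * (1 - P k k) = 0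
    · rw [if_pos h]
      have hPi0 : P k i * μ k = 0 := by
        rcases mul_eq_zero.mp h with h0 | h0
        · rw [h0, mul_zero]
        · have hsum := hPoff k
          rw [show (1 : ℝ) - P k k = 0 from h0] at hsum
          have : P k i = 0 := by
            have := Finset.sum_eq_zero_iff_of_nonneg
              (fun j _ => hPnn k j) |>.mp hsum i
              (Finset.mem_erase.mpr ⟨hik, mem_univ _⟩)
            exact this
          rw [this, zero_mul]
      rw [hPi0]
      rcases mul_eq_zero.mp h with h0 | h0 <;>
        simp [h0, mul_div_assoc]
    · rw [if_neg h]
      have h1 : 1 - P k k ≠ 0 := fun h0 => h (by rw [h0, mul_zero])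
      rw [div_mul_div_comm, div_eq_iff (mul_ne_zero h1 (hπ1' k))]
      ring
  · intro k
    simp only [eq_self_iff_true, ↓reduceIte]
    have h1 := hπ1' k
    field_simp
    ring
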